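/- (Weak law of large numbers for thickets) Let (X, μ) be a probability space and S ⊆ X a measurable event. Fix ε > 0 and an integer n ≥ 1. Then the μ^{2^n−1}-probability of the set of tuples x̄ = (x_σ)_{σ ∈ 2^{<n}} ∈ X^{2^n−1} such that |test(x̄, S) − μ(S)| ≥ ε is at most 1/(4nε²). -/

import Mathlib

open MeasureTheory

/- The characteristic path of `S` through a test tree `x = (x_σ)_{σ ∈ 2^{<n}}` (here a node
`σ` of length `i < n` is encoded as the pair `⟨i, σ⟩` in `Σ i : Fin n, (Fin i → Bool)`):
the `m`-th entry of the path is `1` iff the element of the tree reached after following the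
first `m` answers lies in `S`. -/
open Classical in
noncomputable def charPath {X : Type*} (S : Set X) {n : ℕ}
    (x : (Σ i : Fin n, (Fin i.1 → Bool)) → X) (m : ℕ) (hm : m < n) : Bool :=
  if x ⟨⟨m, hm⟩, fun j : Fin m => charPath S x j.1 (j.2.trans hm)⟩ ∈ S then true else false
termination_by m

/-- `test(x̄, S)`: the fraction of the `n` elements along the characteristic path of `S`
through the test tree `x̄` that lie in `S`. -/
noncomputable def ttest {X : Type*} (S : Set X) {n : ℕ}
    (x : (Σ i : Fin n, (Fin i.1 → Bool)) → X) : ℝ :=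
  (Finset.univ.filter (fun m : Fin n => charPath S x m.1 m.2 = true)).card / n

namespace WLLN

variable {X : Type*} {n : ℕ}

/-- The node of the tree at level `m` along the branch `b`. -/
def node (b : Fin n → Bool) (m : Fin n) : Σ i : Fin n, (Fin i.1 → Bool) :=
  ⟨m, fun j => b ⟨j.1, j.2.trans m.2⟩⟩

lemma charPath_eq_of (S : Set X) (x : (Σ i : Fin n, (Fin i.1 → Bool)) → X) (b : Fin n → Bool)
    (h : ∀ m : Fin n, x (node b m) ∈ S ↔ b m = true) :
    ∀ m (hm : m < n), charPath S x m hm = b ⟨m, hm⟩ := by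
  intro m
  induction m using Nat.strong_induction_on with
  | _ m IH =>
    intro hm
    rw [charPath]
    have he : (fun j : Fin m => charPath S x j.1 (j.2.trans hm)) =
        (fun j : Fin m => b ⟨j.1, j.2.trans hm⟩) := funext fun j => IH j.1 j.2 _
    rw [he]
    have hnode : (⟨⟨m, hm⟩, fun j : Fin m => b ⟨j.1, j.2.trans hm⟩⟩ :
        Σ i : Fin n, (Fin i.1 → Bool)) = node b ⟨m, hm⟩ := rfl
    rw [hnode]
    have hx := h ⟨m, hm⟩
    by_cases hxS : x (node b ⟨m, hm⟩) ∈ S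
    · rw [if_pos hxS]; exact (hx.mp hxS).symm
    · rw [if_neg hxS]
      cases hb : b ⟨m, hm⟩
      · rfl
      · exact absurd (hx.mpr hb) hxS

lemma mem_iff_of_charPath (S : Set X) (x : (Σ i : Fin n, (Fin i.1 → Bool)) → X) (b : Fin n → Bool)
    (h : ∀ m : Fin n, charPath S x m.1 m.2 = b m) :
    ∀ m : Fin n, (x (node b m) ∈ S ↔ b m = true) := by
  intro m
  have hm := h m
  rw [charPath] at hm
  have he : (fun j : Fin m.1 => charPath S x j.1 (j.2.trans m.2)) =
      (fun j : Fin m.1 => b ⟨j.1, j.2.trans m.2⟩) := funext fun j => h ⟨j.1, j.2.trans m.2⟩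
  rw [he] at hm
  have hnode : (⟨⟨m.1, m.2⟩, fun j : Fin m.1 => b ⟨j.1, j.2.trans m.2⟩⟩ :
      Σ i : Fin n, (Fin i.1 → Bool)) = node b m := rfl
  rw [hnode] at hm
  by_cases hxS : x (node b m) ∈ S
  · rw [if_pos hxS] at hm; exact ⟨fun _ => hm.symm, fun _ => hxS⟩
  · rw [if_neg hxS] at hm
    exact ⟨fun h' => absurd h' hxS, fun h' => absurd (hm ▸ h') (by simp)⟩


open Classical in
/-- The factor sets of the cylinder event `{x | charPath x = b}`. -/
def treeSet (S : Set X) (b : Fin n → Bool) (σ : Σ i : Fin n, (Fin i.1 → Bool)) : Set X :=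
  if σ.2 = (fun j => b ⟨j.1, j.2.trans σ.1.2⟩) then (if b σ.1 then S else Sᶜ) else Set.univ

lemma pathSet_eq (S : Set X) (b : Fin n → Bool) :
    {x : (Σ i : Fin n, (Fin i.1 → Bool)) → X | ∀ m : Fin n, charPath S x m.1 m.2 = b m}
      = Set.univ.pi (treeSet S b) := by
  ext x
  simp only [Set.mem_setOf_eq, Set.mem_pi, Set.mem_univ, true_implies]
  constructor
  · intro h σ
    unfold treeSet
    split_ifs with h1 h2
    · obtain ⟨i, τ⟩ := σ
      have h1' : τ = fun j : Fin i.1 => b ⟨j.1, j.2.trans i.2⟩ := h1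
      subst h1'
      exact (mem_iff_of_charPath S x b h i).mpr h2
    · obtain ⟨i, τ⟩ := σ
      have h1' : τ = fun j : Fin i.1 => b ⟨j.1, j.2.trans i.2⟩ := h1
      subst h1'
      intro hx
      exact h2 ((mem_iff_of_charPath S x b h i).mp hx)
    · trivial
  · intro h m
    have key : ∀ m : Fin n, x (node b m) ∈ S ↔ b m = true := by
      intro m
      have h' := h (node b m)
      unfold treeSet at h'
      split_ifs at h' with hc hb
      · exact ⟨fun _ => hb, fun _ => h'⟩
      · exact ⟨fun hx => absurd hx h', fun hbt => absurd hbt hb⟩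
      · exact absurd rfl hc
    have := charPath_eq_of S x b key m.1 m.2
    simpa using this

lemma measurableSet_treeSet [MeasurableSpace X] {S : Set X} (hS : MeasurableSet S)
    (b : Fin n → Bool) (σ : Σ i : Fin n, (Fin i.1 → Bool)) :
    MeasurableSet (treeSet S b σ) := by
  unfold treeSet
  split_ifs
  · exact hS
  · exact hS.compl
  · exact MeasurableSet.univ

lemma measure_pathSet [MeasurableSpace X] (μ : Measure X) [IsProbabilityMeasure μ]
    (S : Set X) (b : Fin n → Bool) :
    Measure.pi (fun _ : Σ i : Fin n, (Fin i.1 → Bool) => μ) (Set.univ.pi (treeSet S b))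
      = ∏ m : Fin n, (if b m then μ S else μ Sᶜ) := by
  rw [Measure.pi_pi]
  rw [← Finset.univ_sigma_univ, Finset.prod_sigma]
  refine Finset.prod_congr rfl fun m _ => ?_
  rw [Finset.prod_eq_single (fun j : Fin m.1 => b ⟨j.1, j.2.trans m.2⟩)]
  · unfold treeSet
    rw [if_pos rfl]
    rw [show (⟨m, fun j : Fin m.1 => b ⟨j.1, j.2.trans m.2⟩⟩ :
        Σ i : Fin n, (Fin i.1 → Bool)).fst = m from rfl]
    split_ifs <;> rfl
  · intro τ _ hτ
    unfold treeSet
    rw [if_neg hτ]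
    exact measure_univ
  · intro h
    exact absurd (Finset.mem_univ _) h


section Bern
variable [MeasurableSpace X] (μ : Measure X) (S : Set X)

/-- Bernoulli measure on `Bool` with parameter `μ S`. -/
noncomputable def bern : Measure Bool :=
  μ S • Measure.dirac true + μ Sᶜ • Measure.dirac false

lemma bern_singleton (b : Bool) : bern μ S {b} = if b then μ S else μ Sᶜ := by
  cases b <;> simp [bern]

lemma isProbabilityMeasure_bern [IsProbabilityMeasure μ] (hS : MeasurableSet S) :
    IsProbabilityMeasure (bern μ S) := by
  constructor
  simp [bern, measure_add_measure_compl hS]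

variable {n : ℕ}

/-- The product Bernoulli measure on `Fin n → Bool`. -/
noncomputable def bpi (n : ℕ) : Measure (Fin n → Bool) :=
  Measure.pi (fun _ : Fin n => bern μ S)

lemma bpi_singleton [IsProbabilityMeasure μ] (hS : MeasurableSet S) (b : Fin n → Bool) :
    bpi μ S n {b} = ∏ m : Fin n, (if b m then μ S else μ Sᶜ) := by
  have : ({b} : Set (Fin n → Bool)) = Set.univ.pi (fun m => {b m}) := by
    ext c
    simp [Set.mem_singleton_iff, funext_iff]
  haveI h' := isProbabilityMeasure_bern μ S hS
  rw [this, bpi, Measure.pi_pi]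
  exact Finset.prod_congr rfl fun m _ => bern_singleton μ S (b m)

lemma bpi_eval_preimage [IsProbabilityMeasure μ] (hS : MeasurableSet S) (i : Fin n)
    (A : Set Bool) :
    bpi μ S n ((fun b : Fin n → Bool => b i) ⁻¹' A) = bern μ S A := by
  haveI := isProbabilityMeasure_bern μ S hS
  have h1 : (fun b : Fin n → Bool => b i) ⁻¹' A
      = Set.univ.pi (fun k => if k = i then A else Set.univ) := by
    ext c
    simp only [Set.mem_preimage, Set.mem_pi, Set.mem_univ, true_implies]
    constructor
    · intro h k
      split_ifs with hk
      · subst hk; exact h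
      · trivial
    · intro h
      have := h i
      rwa [if_pos rfl] at this
  rw [h1, bpi, Measure.pi_pi]
  calc ∏ k : Fin n, bern μ S (if k = i then A else Set.univ)
      = ∏ k : Fin n, (if k = i then bern μ S A else 1) := by
        refine Finset.prod_congr rfl fun k _ => ?_
        split_ifs
        · rfl
        · exact measure_univ
    _ = bern μ S A := by simp

lemma indepFun_eval [IsProbabilityMeasure μ] (hS : MeasurableSet S) {i j : Fin n}
    (hij : i ≠ j) :
    ProbabilityTheory.IndepFun (fun b : Fin n → Bool => b i)
      (fun b : Fin n → Bool => b j) (bpi μ S n) := by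
  haveI := isProbabilityMeasure_bern μ S hS
  rw [ProbabilityTheory.indepFun_iff_measure_inter_preimage_eq_mul]
  intro A B _ _
  have h1 : (fun b : Fin n → Bool => b i) ⁻¹' A ∩ (fun b : Fin n → Bool => b j) ⁻¹' B
      = Set.univ.pi (fun k => if k = i then A else if k = j then B else Set.univ) := by
    ext c
    simp only [Set.mem_inter_iff, Set.mem_preimage, Set.mem_pi, Set.mem_univ, true_implies]
    constructor
    · rintro ⟨hA, hB⟩ k
      split_ifs with hk1 hk2
      · subst hk1; exact hA
      · subst hk2; exact hB
      · trivial
    · intro h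
      refine ⟨?_, ?_⟩
      · have := h i; rwa [if_pos rfl] at this
      · have := h j; rw [if_neg (Ne.symm hij), if_pos rfl] at this; exact this
  rw [h1, bpi_eval_preimage μ S hS, bpi_eval_preimage μ S hS, bpi, Measure.pi_pi]
  calc ∏ k : Fin n, bern μ S (if k = i then A else if k = j then B else Set.univ)
      = ∏ k : Fin n, ((if k = i then bern μ S A else 1) * (if k = j then bern μ S B else 1)) := by
        refine Finset.prod_congr rfl fun k _ => ?_
        split_ifs with hk1 hk2 hk3
        · exact absurd (hk1 ▸ hk2) hij
        · rw [mul_one]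
        · rw [one_mul]
        · rw [one_mul]; exact measure_univ
    _ = bern μ S A * bern μ S B := by rw [Finset.prod_mul_distrib]; simp

end Bern


section Prob
open ProbabilityTheory

variable [MeasurableSpace X] (μ : Measure X) (S : Set X) {n : ℕ}

/-- The indicator of the `m`-th coordinate. -/
noncomputable def Yf (n : ℕ) (m : Fin n) : (Fin n → Bool) → ℝ := fun b => if b m then 1 else 0

lemma Yf_eq_indicator (m : Fin n) : Yf n m = Set.indicator
    ((fun b : Fin n → Bool => b m) ⁻¹' {true}) (fun _ => (1 : ℝ)) := by
  funext b
  by_cases hb : b m <;> simp [Yf, hb, Set.indicator_apply]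

lemma integral_Yf [IsProbabilityMeasure μ] (hS : MeasurableSet S) (m : Fin n) :
    ∫ b, Yf n m b ∂(bpi μ S n) = (μ S).toReal := by
  haveI := isProbabilityMeasure_bern μ S hS
  have hms : MeasurableSet ((fun b : Fin n → Bool => b m) ⁻¹' {true}) :=
    (MeasurableSet.singleton true).preimage (measurable_pi_apply m)
  rw [show (fun b => Yf n m b) = Yf n m from rfl, Yf_eq_indicator,
    MeasureTheory.integral_indicator_const (1 : ℝ) hms, measureReal_def, bpi_eval_preimage μ S hS,
    bern_singleton μ S true]
  simp

lemma variance_Yf [IsProbabilityMeasure μ] (hS : MeasurableSet S) (m : Fin n) :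
    variance (Yf n m) (bpi μ S n) = (μ S).toReal - (μ S).toReal ^ 2 := by
  haveI := isProbabilityMeasure_bern μ S hS
  haveI : IsProbabilityMeasure (bpi μ S n) := by unfold bpi; infer_instance
  rw [variance_eq_sub MemLp.of_discrete]
  have hsq : (Yf n m) ^ 2 = Yf n m := by
    funext b
    by_cases hb : b m <;> simp [Yf, hb]
  rw [hsq, integral_Yf μ S hS m]

lemma variance_sum_Yf [IsProbabilityMeasure μ] (hS : MeasurableSet S) :
    variance (∑ m : Fin n, Yf n m) (bpi μ S n)
      = n * ((μ S).toReal - (μ S).toReal ^ 2) := by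
  haveI := isProbabilityMeasure_bern μ S hS
  haveI : IsProbabilityMeasure (bpi μ S n) := by unfold bpi; infer_instance
  rw [IndepFun.variance_sum (fun m _ => MemLp.of_discrete)]
  · rw [Finset.sum_congr rfl fun m _ => variance_Yf μ S hS m]
    simp [mul_comm]
    ring
  · intro i _ j _ hij
    have h := indepFun_eval μ S hS hij
    have hg : Measurable (fun y : Bool => if y then (1:ℝ) else 0) := Measurable.of_discrete
    exact h.comp hg hg

lemma integral_sum_Yf [IsProbabilityMeasure μ] (hS : MeasurableSet S) :
    ∫ b, (∑ m : Fin n, Yf n m) b ∂(bpi μ S n) = n * (μ S).toReal := by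
  haveI := isProbabilityMeasure_bern μ S hS
  haveI : IsProbabilityMeasure (bpi μ S n) := by unfold bpi; infer_instance
  have : ∀ b : Fin n → Bool, (∑ m : Fin n, Yf n m) b = ∑ m : Fin n, Yf n m b := by
    intro b; simp
  rw [integral_congr_ae (Filter.Eventually.of_forall this),
    integral_finset_sum _ (fun m _ => (MemLp.of_discrete (p := 2)).integrable one_le_two)]
  rw [Finset.sum_congr rfl fun m _ => integral_Yf μ S hS m]
  simp [mul_comm]

lemma cheb [IsProbabilityMeasure μ] (hS : MeasurableSet S) {ε : ℝ} (hε : 0 < ε)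
    (hn : 1 ≤ n) :
    bpi μ S n {b | (n:ℝ) * ε ≤ |(∑ m : Fin n, Yf n m) b - n * (μ S).toReal|}
      ≤ ENNReal.ofReal (1 / (4 * n * ε ^ 2)) := by
  haveI := isProbabilityMeasure_bern μ S hS
  haveI : IsProbabilityMeasure (bpi μ S n) := by unfold bpi; infer_instance
  have hn0 : (0:ℝ) < n := by exact_mod_cast Nat.lt_of_lt_of_le Nat.zero_lt_one hn
  have hc : 0 < (n:ℝ) * ε := mul_pos hn0 hε
  have key := meas_ge_le_variance_div_sq (μ := bpi μ S n)
    (X := ∑ m : Fin n, Yf n m) MemLp.of_discrete hc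
  rw [show (bpi μ S n)[∑ m : Fin n, Yf n m] = n * (μ S).toReal
    from integral_sum_Yf μ S hS] at key
  refine le_trans key ?_
  rw [variance_sum_Yf μ S hS]
  apply ENNReal.ofReal_le_ofReal
  set p := (μ S).toReal with hp
  have hp0 : 0 ≤ p := ENNReal.toReal_nonneg
  have hp1 : p ≤ 1 := by
    have h1 : μ S ≤ 1 := prob_le_one
    have := ENNReal.toReal_mono ENNReal.one_ne_top h1
    simpa using this
  have h14 : p - p ^ 2 ≤ 1 / 4 := by nlinarith [sq_nonneg (p - 1/2)]
  have hrw : (n:ℝ) * (p - p ^ 2) / ((n:ℝ) * ε) ^ 2 = (p - p ^ 2) / (n * ε ^ 2) := by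
    field_simp
  rw [hrw]
  calc (p - p ^ 2) / (n * ε ^ 2) ≤ (1 / 4) / (n * ε ^ 2) := by
        gcongr
    _ = 1 / (4 * n * ε ^ 2) := by ring

end Prob

end WLLN

/-- Weak law of large numbers for thickets: for a measurable event `S` in a probability space
`(X, μ)`, `ε > 0` and `n ≥ 1`, the `μ^{2^n−1}`-probability that a random test tree of height
`n` gives an estimate of `μ(S)` off by at least `ε` is at most `1/(4nε²)`. -/
theorem weak_law_for_thickets {X : Type*} [MeasurableSpace X] (μ : Measure X)
    [IsProbabilityMeasure μ] (S : Set X) (hS : MeasurableSet S)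
    (ε : ℝ) (hε : 0 < ε) (n : ℕ) (hn : 1 ≤ n) :
    (Measure.pi (fun _ : Σ i : Fin n, (Fin i.1 → Bool) => μ))
        {x | ε ≤ |ttest S x - (μ S).toReal|} ≤
      ENNReal.ofReal (1 / (4 * n * ε ^ 2)) := by
  have httest : ∀ x : (Σ i : Fin n, (Fin i.1 → Bool)) → X, ttest S x
      = ((Finset.univ.filter (fun m : Fin n => charPath S x m.1 m.2 = true)).card : ℝ) / n :=
    fun x => rfl
  set F : Finset (Fin n → Bool) := Finset.univ.filter
    (fun b => ε ≤ |((Finset.univ.filter (fun m : Fin n => b m = true)).card : ℝ) / n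
      - (μ S).toReal|) with hF
  have hset : {x : (Σ i : Fin n, (Fin i.1 → Bool)) → X | ε ≤ |ttest S x - (μ S).toReal|}
      = ⋃ b ∈ F, {x | ∀ m : Fin n, charPath S x m.1 m.2 = b m} := by
    ext x
    simp only [Set.mem_setOf_eq, Set.mem_iUnion, hF, Finset.mem_filter, Finset.mem_univ,
      true_and, exists_prop]
    constructor
    · intro hx
      refine ⟨fun m => charPath S x m.1 m.2, ?_, fun m => rfl⟩
      rw [httest] at hx
      exact hx
    · rintro ⟨b, hb, hbx⟩
      rw [httest]
      have heq : (Finset.univ.filter (fun m : Fin n => charPath S x m.1 m.2 = true))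
          = (Finset.univ.filter (fun m : Fin n => b m = true)) := by
        apply Finset.filter_congr
        intro m _
        rw [hbx m]
      rw [heq]
      exact hb
  rw [hset]
  have hmeas : ∀ b ∈ F, MeasurableSet {x : (Σ i : Fin n, (Fin i.1 → Bool)) → X |
      ∀ m : Fin n, charPath S x m.1 m.2 = b m} := by
    intro b _
    rw [WLLN.pathSet_eq]
    exact MeasurableSet.univ_pi (WLLN.measurableSet_treeSet hS b)
  have hdisj : (↑F : Set (Fin n → Bool)).PairwiseDisjoint
      (fun b => {x : (Σ i : Fin n, (Fin i.1 → Bool)) → X |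
        ∀ m : Fin n, charPath S x m.1 m.2 = b m}) := by
    intro b1 _ b2 _ hne
    rw [Function.onFun, Set.disjoint_left]
    intro x h1 h2
    exact hne (funext fun m => (h1 m).symm.trans (h2 m))
  rw [measure_biUnion_finset hdisj hmeas]
  have hsum : ∀ b ∈ F, Measure.pi (fun _ : Σ i : Fin n, (Fin i.1 → Bool) => μ)
      {x | ∀ m : Fin n, charPath S x m.1 m.2 = b m} = WLLN.bpi μ S n {b} := by
    intro b _
    rw [WLLN.pathSet_eq, WLLN.measure_pathSet, WLLN.bpi_singleton μ S hS]
  rw [Finset.sum_congr rfl hsum]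
  have hFm : ∑ b ∈ F, WLLN.bpi μ S n {b} = WLLN.bpi μ S n ↑F := by
    rw [← measure_biUnion_finset (fun b1 _ b2 _ hne => by
        simpa [Function.onFun] using (Set.disjoint_singleton).mpr hne)
      (fun b _ => measurableSet_singleton b)]
    congr 1
    ext b
    simp
  rw [hFm]
  refine le_trans (measure_mono ?_) (WLLN.cheb μ S hS hε hn)
  intro b hb
  simp only [hF, Finset.coe_filter, Set.mem_setOf_eq, Finset.mem_univ, true_and] at hb
  simp only [Set.mem_setOf_eq]
  have hn0 : (0:ℝ) < n := by exact_mod_cast Nat.lt_of_lt_of_le Nat.zero_lt_one hn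
  have hTb : (∑ m : Fin n, WLLN.Yf n m) b
      = ((Finset.univ.filter (fun m : Fin n => b m = true)).card : ℝ) := by
    rw [Finset.sum_apply]
    simp [WLLN.Yf, Finset.sum_boole]
  rw [hTb]
  set c := ((Finset.univ.filter (fun m : Fin n => b m = true)).card : ℝ) with hc
  have hrw : c - n * (μ S).toReal = n * (c / n - (μ S).toReal) := by
    field_simp
  rw [hrw, abs_mul, abs_of_pos hn0]
  exact mul_le_mul_of_nonneg_left hb hn0.le
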